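/- Quasi-triangle inequality for the parabolic pseudodistance: For every t > 0 and all points γ, γ', γ'' in the cosphere bundle S*(ℝ^d) = ℝ^d × S^{d−1}, one has d_t(γ; γ'') ≤ 4 d_t(γ; γ') + 4 d_t(γ'; γ''). -/

import Mathlib

open scoped ENNReal

noncomputable section

/-- Euclidean space `ℝ^d`. -/
abbrev Rd (d : ℕ) : Type := EuclideanSpace ℝ (Fin d)

/-- The parabolic pseudodistance `d_t` on the cosphere bundle
`S^*(ℝ^d) = ℝ^d × S^{d-1}`, defined on pairs `γ = (x,ν)`:
`d_t(x,ν; x',ν') = |⟨ν, x-x'⟩| + |⟨ν', x-x'⟩| + t|ν-ν'|² + t⁻¹|x-x'|²`. -/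
def cosDist {d : ℕ} (t : ℝ) (γ γ' : Rd d × Rd d) : ℝ :=
  |(inner ℝ γ.2 (γ.1 - γ'.1) : ℝ)| + |(inner ℝ γ'.2 (γ.1 - γ'.1) : ℝ)|
    + t * ‖γ.2 - γ'.2‖ ^ 2 + t⁻¹ * ‖γ.1 - γ'.1‖ ^ 2

/-- **Quasi-triangle inequality for the parabolic pseudodistance.**
For every `t > 0` and all points `γ, γ', γ''` of the cosphere bundle
`S^*(ℝ^d) = ℝ^d × S^{d-1}`, one has
`d_t(γ; γ'') ≤ 4 d_t(γ; γ') + 4 d_t(γ'; γ'')`. -/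
theorem cosDist_quasi_triangle {d : ℕ} (t : ℝ) (ht : 0 < t)
    (γ γ' γ'' : Rd d × Rd d)
    (hγ : ‖γ.2‖ = 1) (hγ' : ‖γ'.2‖ = 1) (hγ'' : ‖γ''.2‖ = 1) :
    cosDist t γ γ'' ≤ 4 * cosDist t γ γ' + 4 * cosDist t γ' γ'' := by

  obtain ⟨x, ν⟩ := γ
  obtain ⟨x', ν'⟩ := γ'
  obtain ⟨x'', ν''⟩ := γ''
  simp only [cosDist]
  have hti : (0:ℝ) < t⁻¹ := inv_pos.mpr ht
  -- AM-GM
  have hAG : ∀ a b : ℝ, 0 ≤ a → 0 ≤ b → 2 * (a * b) ≤ t * a ^ 2 + t⁻¹ * b ^ 2 := by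
    intro a b _ _
    nlinarith [mul_nonneg hti.le (sq_nonneg (t * a - b)), mul_inv_cancel₀ ht.ne',
      sq_nonneg (t * a - b)]
  have hAG1 := hAG ‖ν - ν'‖ ‖x' - x''‖ (norm_nonneg _) (norm_nonneg _)
  have hAG2 := hAG ‖ν' - ν''‖ ‖x - x'‖ (norm_nonneg _) (norm_nonneg _)
  -- norm triangle inequalities
  have hnν : ‖ν - ν''‖ ≤ ‖ν - ν'‖ + ‖ν' - ν''‖ := by
    have := norm_add_le (ν - ν') (ν' - ν''); rwa [sub_add_sub_cancel] at this
  have hnx : ‖x - x''‖ ≤ ‖x - x'‖ + ‖x' - x''‖ := by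
    have := norm_add_le (x - x') (x' - x''); rwa [sub_add_sub_cancel] at this
  have hsqν : ‖ν - ν''‖ ^ 2 ≤ 2 * ‖ν - ν'‖ ^ 2 + 2 * ‖ν' - ν''‖ ^ 2 := by
    nlinarith [sq_nonneg (‖ν - ν'‖ - ‖ν' - ν''‖), norm_nonneg (ν - ν''),
      norm_nonneg (ν - ν'), norm_nonneg (ν' - ν'')]
  have hsqx : ‖x - x''‖ ^ 2 ≤ 2 * ‖x - x'‖ ^ 2 + 2 * ‖x' - x''‖ ^ 2 := by
    nlinarith [sq_nonneg (‖x - x'‖ - ‖x' - x''‖), norm_nonneg (x - x''),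
      norm_nonneg (x - x'), norm_nonneg (x' - x'')]
  have htν := mul_le_mul_of_nonneg_left hsqν ht.le
  have htx := mul_le_mul_of_nonneg_left hsqx hti.le
  -- inner product bounds
  have hsplit : ∀ w : Rd d, (inner ℝ w (x - x'') : ℝ) = inner ℝ w (x - x') + inner ℝ w (x' - x'') := by
    intro w
    rw [show x - x'' = (x - x') + (x' - x'') from (sub_add_sub_cancel x x' x'').symm,
      inner_add_right]
  have hswap : ∀ (w w' : Rd d) (v : Rd d),
      |(inner ℝ w v : ℝ)| ≤ |(inner ℝ w' v : ℝ)| + ‖w - w'‖ * ‖v‖ := by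
    intro w w' v
    have h : (inner ℝ w v : ℝ) = inner ℝ w' v + inner ℝ (w - w') v := by
      rw [inner_sub_left]; ring
    rw [h]
    exact (abs_add_le _ _).trans (add_le_add_right (abs_real_inner_le_norm _ _) _)
  have h1 : |(inner ℝ ν (x - x'') : ℝ)| ≤ |(inner ℝ ν (x - x') : ℝ)|
      + |(inner ℝ ν' (x' - x'') : ℝ)| + ‖ν - ν'‖ * ‖x' - x''‖ := by
    rw [hsplit ν]
    calc |(inner ℝ ν (x - x') : ℝ) + inner ℝ ν (x' - x'')|
        ≤ |(inner ℝ ν (x - x') : ℝ)| + |(inner ℝ ν (x' - x'') : ℝ)| := abs_add_le _ _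
      _ ≤ _ := by have := hswap ν ν' (x' - x''); linarith
  have h2 : |(inner ℝ ν'' (x - x'') : ℝ)| ≤ |(inner ℝ ν' (x - x') : ℝ)|
      + |(inner ℝ ν'' (x' - x'') : ℝ)| + ‖ν' - ν''‖ * ‖x - x'‖ := by
    rw [hsplit ν'']
    calc |(inner ℝ ν'' (x - x') : ℝ) + inner ℝ ν'' (x' - x'')|
        ≤ |(inner ℝ ν'' (x - x') : ℝ)| + |(inner ℝ ν'' (x' - x'') : ℝ)| := abs_add_le _ _
      _ ≤ _ := by
          have := hswap ν'' ν' (x - x')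
          have hc : ‖ν'' - ν'‖ = ‖ν' - ν''‖ := norm_sub_rev _ _
          rw [hc] at this; linarith
  have habs : ∀ (w : Rd d) (v : Rd d), (0:ℝ) ≤ |(inner ℝ w v : ℝ)| := fun _ _ => abs_nonneg _
  have hp1 := habs ν (x - x')
  have hp2 := habs ν' (x - x')
  have hp3 := habs ν' (x' - x'')
  have hp4 := habs ν'' (x' - x'')
  have hq1 := mul_nonneg ht.le (sq_nonneg ‖ν - ν'‖)
  have hq2 := mul_nonneg ht.le (sq_nonneg ‖ν' - ν''‖)
  have hq3 := mul_nonneg hti.le (sq_nonneg ‖x - x'‖)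
  have hq4 := mul_nonneg hti.le (sq_nonneg ‖x' - x''‖)
  linarith

end
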